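/- For all complex numbers a, b and all real numbers x > 0 and y > 0, one has K_a(x) · K_b(y) = (1/2) ∫_{−∞}^{∞} K_{a−b}( (x² + y² + 2xy·cosh(u))^{1/2} ) · e^{−((a+b)/2)·u} · ((x e^u + y)/(y e^u + x))^{(a−b)/2} du, where for ν ∈ ℂ and z > 0 the K-Bessel function is given by K_ν(z) = (1/2) ∫_{−∞}^{∞} e^{−ν t − z·cosh(t)} dt. -/

import Mathlib

open MeasureTheory Complex

/-- The modified Bessel function of the second kind, for complex order `ν` and
real argument `z`, defined by `K_ν(z) = (1/2)∫_{-∞}^{∞} e^{-νt - z cosh t} dt`. -/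
noncomputable def besselK (ν : ℂ) (z : ℝ) : ℂ :=
  (1/2) * ∫ t : ℝ, Complex.exp (-ν * (t : ℂ) - (z : ℂ) * (Real.cosh t : ℂ))

section BesselAux

open Set Filter Asymptotics

lemma integrableOn_exp_aux {z : ℝ} (hz : 0 < z) (c : ℝ) :
    IntegrableOn (fun t : ℝ => Real.exp (-c * t - z * Real.cosh t)) (Set.Ioi 0) := by
  apply integrable_of_isBigO_exp_neg (a := 0) (b := 1) one_pos
  · apply Continuous.continuousOn
    fun_prop
  · rw [isBigO_iff]
    refine ⟨1, ?_⟩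
    filter_upwards [eventually_ge_atTop (max 0 (8 * (1 + |c|) / z))] with t ht
    have ht0 : 0 ≤ t := le_trans (le_max_left _ _) ht
    have ht1 : 8 * (1 + |c|) / z ≤ t := le_trans (le_max_right _ _) ht
    have ht2 : 8 * (1 + |c|) ≤ t * z := (div_le_iff₀ hz).mp ht1
    have h2 : t / 2 + 1 ≤ Real.exp (t / 2) := Real.add_one_le_exp _
    have h3 : Real.exp (t / 2) * Real.exp (t / 2) = Real.exp t := by
      rw [← Real.exp_add]; ring_nf
    have hq : t ^ 2 / 4 ≤ Real.exp t := by nlinarith [Real.exp_pos (t / 2)]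
    have h4 : Real.exp t / 2 ≤ Real.cosh t := by
      rw [Real.cosh_eq]; nlinarith [Real.exp_pos (-t)]
    have hc1 : -c * t ≤ |c| * t := by nlinarith [neg_abs_le c]
    have key : -c * t - z * Real.cosh t ≤ -1 * t := by
      have m1 : z * (t ^ 2 / 4) ≤ z * Real.exp t := by nlinarith
      have m2 : 8 * (1 + |c|) * t ≤ t * z * t := by nlinarith
      nlinarith [mul_le_mul_of_nonneg_left h4 hz.le]
    simp only [Real.norm_eq_abs, abs_of_pos (Real.exp_pos _), one_mul]
    exact Real.exp_le_exp.mpr key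

lemma integrable_besselK_integrand (ν : ℂ) {z : ℝ} (hz : 0 < z) :
    Integrable fun t : ℝ => Complex.exp (-ν * (t : ℂ) - (z : ℂ) * (Real.cosh t : ℂ)) := by
  have hre : Integrable fun t : ℝ => Real.exp (-ν.re * t - z * Real.cosh t) := by
    rw [← integrableOn_univ, ← Set.Iio_union_Ici (a := (0 : ℝ)), integrableOn_union,
      integrableOn_Ici_iff_integrableOn_Ioi]
    constructor
    · rw [← (Measure.measurePreserving_neg (volume : Measure ℝ)).integrableOn_comp_preimage
        (Homeomorph.neg ℝ).measurableEmbedding]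
      simp only [Function.comp_def, neg_preimage, neg_Iio, neg_neg, neg_zero]
      refine (integrableOn_exp_aux hz (-ν.re)).congr_fun (fun t ht => ?_) measurableSet_Ioi
      simp only [Real.cosh_neg]
      ring_nf
    · exact integrableOn_exp_aux hz ν.re
  refine hre.mono' (Continuous.aestronglyMeasurable (by fun_prop)) ?_
  filter_upwards with t
  have hre2 : (-ν * (t : ℂ) - (z : ℂ) * (Real.cosh t : ℂ)).re = -ν.re * t - z * Real.cosh t := by
    simp [Complex.mul_re]
  rw [Complex.norm_exp, hre2]

lemma cosh_shift {x y : ℝ} (hx : 0 < x) (hy : 0 < y) (u v : ℝ) :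
    x * Real.cosh (v + u / 2) + y * Real.cosh (v - u / 2) =
      Real.sqrt (x ^ 2 + y ^ 2 + 2 * x * y * Real.cosh u) *
        Real.cosh (v + Real.log ((x * Real.exp u + y) / (y * Real.exp u + x)) / 2) := by
  set A := Real.exp (u / 2) with hA
  set B := Real.exp (-(u / 2)) with hB
  have hA0 : 0 < A := Real.exp_pos _
  have hB0 : 0 < B := Real.exp_pos _
  have hab : A * B = 1 := by rw [hA, hB, ← Real.exp_add]; simp
  have hAA : A * A = Real.exp u := by rw [hA, ← Real.exp_add]; ring_nf
  have hBB : B * B = Real.exp (-u) := by rw [hB, ← Real.exp_add]; ring_nf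
  set C := x * A + y * B with hC
  set D := x * B + y * A with hD
  have hC0 : 0 < C := by positivity
  have hD0 : 0 < D := by positivity
  have hCD : C * D = x ^ 2 + y ^ 2 + 2 * x * y * Real.cosh u := by
    rw [Real.cosh_eq, hC, hD]
    linear_combination (x ^ 2 + y ^ 2) * hab + x * y * hAA + x * y * hBB
  have hnum : 0 < x * Real.exp u + y := by positivity
  have hden : 0 < y * Real.exp u + x := by positivity
  have hrCD : (x * Real.exp u + y) / (y * Real.exp u + x) = C / D := by
    rw [div_eq_div_iff hden.ne' hD0.ne', hC, hD]
    linear_combination (x ^ 2 - y ^ 2) * (-B) * hAA + (x ^ 2 - y ^ 2) * A * hab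
  set θ := Real.log ((x * Real.exp u + y) / (y * Real.exp u + x)) / 2 with hθ
  have hr0 : 0 < (x * Real.exp u + y) / (y * Real.exp u + x) := by positivity
  have hE0 : 0 < Real.exp θ := Real.exp_pos _
  have hexpθ2 : Real.exp θ * Real.exp θ = C / D := by
    rw [← Real.exp_add, show θ + θ = Real.log ((x * Real.exp u + y) / (y * Real.exp u + x)) by
      rw [hθ]; ring, Real.exp_log hr0, hrCD]
  have hS : Real.sqrt (C * D) * Real.sqrt (C * D) = C * D :=
    Real.mul_self_sqrt (by positivity)
  have h1 : Real.sqrt (C * D) * Real.exp θ = C := by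
    have hsq : (Real.sqrt (C * D) * Real.exp θ) ^ 2 = C ^ 2 := by
      have : (Real.sqrt (C * D) * Real.exp θ) ^ 2
          = (Real.sqrt (C * D) * Real.sqrt (C * D)) * (Real.exp θ * Real.exp θ) := by ring
      rw [this, hS, hexpθ2]
      field_simp
    calc Real.sqrt (C * D) * Real.exp θ
        = Real.sqrt ((Real.sqrt (C * D) * Real.exp θ) ^ 2) := by
          rw [Real.sqrt_sq (by positivity)]
      _ = C := by rw [hsq, Real.sqrt_sq hC0.le]
  have h2 : Real.sqrt (C * D) * Real.exp (-θ) = D := by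
    have key : D * Real.exp θ * Real.exp θ = C := by
      rw [mul_assoc, hexpθ2]; field_simp
    have hstep : Real.sqrt (C * D) * Real.exp (-θ) * Real.exp θ = D * Real.exp θ := by
      rw [mul_assoc, ← Real.exp_add, neg_add_cancel, Real.exp_zero, mul_one]
      nlinarith [h1, key]
    exact mul_right_cancel₀ hE0.ne' (by rw [hstep])
  rw [← hCD, Real.cosh_eq, Real.cosh_eq, Real.cosh_eq]
  rw [show -(v + u / 2) = -v + -(u / 2) by ring, show v - u / 2 = v + -(u / 2) by ring,
    show -(v + -(u / 2)) = -v + u / 2 by ring, show -(v + θ) = -v + -θ by ring,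
    Real.exp_add, Real.exp_add, Real.exp_add, Real.exp_add, Real.exp_add, Real.exp_add]
  rw [← hA, ← hB]
  linear_combination (-(Real.exp v) / 2) * h1 + (-(Real.exp (-v)) / 2) * h2
    + (-(Real.exp v) / 2) * hC + (-(Real.exp (-v)) / 2) * hD

lemma cpow_half_log {r : ℝ} (hr : 0 < r) (w : ℂ) :
    ((r : ℝ) : ℂ) ^ (w / 2) = Complex.exp (w * ((Real.log r / 2 : ℝ) : ℂ)) := by
  rw [Complex.cpow_def_of_ne_zero (Complex.ofReal_ne_zero.mpr hr.ne'),
    ← Complex.ofReal_log hr.le]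
  congr 1
  push_cast
  ring

lemma mp_shear : MeasurePreserving (fun p : ℝ × ℝ => (p.1, p.1 - p.2))
    ((volume : Measure ℝ).prod volume) ((volume : Measure ℝ).prod volume) :=
  MeasurePreserving.skew_product (MeasurePreserving.id _)
    (measurable_fst.sub measurable_snd)
    (Filter.Eventually.of_forall fun s => Measure.map_sub_left_eq_self volume s)

end BesselAux

/-- Product formula for two K-Bessel functions of different (complex) orders:
`K_a(x) K_b(y) = (1/2) ∫_{-∞}^{∞} K_{a-b}(√(x²+y²+2xy cosh u))
  e^{-((a+b)/2)u} ((x e^u + y)/(y e^u + x))^{(a-b)/2} du`. -/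
theorem besselK_product_formula (a b : ℂ) (x y : ℝ) (hx : 0 < x) (hy : 0 < y) :
    besselK a x * besselK b y =
      (1/2) * ∫ u : ℝ,
        besselK (a - b) (Real.sqrt (x ^ 2 + y ^ 2 + 2 * x * y * Real.cosh u)) *
          Complex.exp (-((a + b) / 2) * (u : ℂ)) *
          (((x * Real.exp u + y) / (y * Real.exp u + x) : ℝ) : ℂ) ^ ((a - b) / 2) := by
  set f : ℝ → ℂ := fun s => Complex.exp (-a * (s : ℂ) - (x : ℂ) * (Real.cosh s : ℂ)) with hf_def
  set g : ℝ → ℂ := fun t => Complex.exp (b * (t : ℂ) - (y : ℂ) * (Real.cosh t : ℂ)) with hg_def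
  have hf : Integrable f := integrable_besselK_integrand a hx
  have hg : Integrable g := by
    rw [hg_def]
    have h := integrable_besselK_integrand (-b) hy
    simpa only [neg_neg] using h
  have hprod : Integrable (Function.uncurry fun s u : ℝ => f s * g (s - u))
      ((volume : Measure ℝ).prod volume) := by
    have hFp : Integrable (fun p : ℝ × ℝ => f p.1 * g p.2) ((volume : Measure ℝ).prod volume) :=
      hf.mul_prod hg
    have h := (mp_shear.integrable_comp hFp.aestronglyMeasurable).mpr hFp
    exact h
  have key : besselK a x * besselK b y = (1/4 : ℂ) * ∫ u : ℝ, ∫ s : ℝ, f s * g (s - u) := by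
    have hKa : besselK a x = (1/2 : ℂ) * ∫ s : ℝ, f s := rfl
    have hKb : besselK b y = (1/2 : ℂ) * ∫ t : ℝ, g t := by
      rw [besselK]
      congr 1
      calc (∫ t : ℝ, Complex.exp (-b * (t : ℂ) - (y : ℂ) * (Real.cosh t : ℂ)))
          = ∫ t : ℝ, g (-t) := by
            congr 1; funext t
            simp only [hg_def]
            push_cast [Real.cosh_neg]
            ring_nf
        _ = ∫ t : ℝ, g t := integral_neg_eq_self g volume
    have hswap : (∫ s : ℝ, f s) * (∫ t : ℝ, g t) = ∫ u : ℝ, ∫ s : ℝ, f s * g (s - u) := by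
      rw [← integral_integral_swap hprod, ← integral_mul_const]
      congr 1; funext s
      rw [integral_const_mul, integral_sub_left_eq_self g volume s]
    rw [hKa, hKb, mul_mul_mul_comm, ← hswap]
    norm_num
  have hinner : ∀ u : ℝ, (∫ s : ℝ, f s * g (s - u))
      = 2 * (besselK (a - b) (Real.sqrt (x ^ 2 + y ^ 2 + 2 * x * y * Real.cosh u)) *
          Complex.exp (-((a + b) / 2) * (u : ℂ)) *
          (((x * Real.exp u + y) / (y * Real.exp u + x) : ℝ) : ℂ) ^ ((a - b) / 2)) := by
    intro u
    set R := Real.sqrt (x ^ 2 + y ^ 2 + 2 * x * y * Real.cosh u) with hRdef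
    set r := (x * Real.exp u + y) / (y * Real.exp u + x) with hrdef
    have hr0 : 0 < r := by rw [hrdef]; positivity
    set θ := Real.log r / 2 with hθdef
    have hcosh : ∀ v : ℝ, x * Real.cosh (v + u / 2) + y * Real.cosh (v - u / 2)
        = R * Real.cosh (v + θ) := fun v => cosh_shift hx hy u v
    calc (∫ s : ℝ, f s * g (s - u))
        = ∫ v : ℝ, f (v + u / 2) * g (v + u / 2 - u) :=
          (integral_add_right_eq_self (fun s => f s * g (s - u)) (u / 2)).symm
      _ = ∫ v : ℝ, Complex.exp (-((a + b) / 2) * (u : ℂ)) *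
            Complex.exp (-(a - b) * (v : ℂ) - (R : ℂ) * (Real.cosh (v + θ) : ℂ)) := by
          congr 1; funext v
          have hc : (x : ℂ) * (Real.cosh (v + u / 2) : ℂ) + (y : ℂ) * (Real.cosh (v - u / 2) : ℂ)
              = (R : ℂ) * (Real.cosh (v + θ) : ℂ) := by
            exact_mod_cast hcosh v
          simp only [hf_def, hg_def]
          rw [show v + u / 2 - u = v - u / 2 by ring, ← Complex.exp_add, ← Complex.exp_add]
          congr 1
          push_cast
          push_cast at hc
          linear_combination -hc
      _ = Complex.exp (-((a + b) / 2) * (u : ℂ)) *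
            ∫ v : ℝ, Complex.exp (-(a - b) * (v : ℂ) - (R : ℂ) * (Real.cosh (v + θ) : ℂ)) :=
          integral_const_mul _ _
      _ = Complex.exp (-((a + b) / 2) * (u : ℂ)) *
            ∫ w : ℝ, Complex.exp ((a - b) * (θ : ℂ)) *
              Complex.exp (-(a - b) * (w : ℂ) - (R : ℂ) * (Real.cosh w : ℂ)) := by
          congr 1
          rw [← integral_sub_right_eq_self
            (fun v : ℝ => Complex.exp (-(a - b) * (v : ℂ) - (R : ℂ) * (Real.cosh (v + θ) : ℂ))) θ]
          congr 1; funext w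
          show Complex.exp (-(a - b) * ((w - θ : ℝ) : ℂ) - (R : ℂ) * (Real.cosh (w - θ + θ) : ℂ)) = _
          rw [show w - θ + θ = w by ring, ← Complex.exp_add]
          congr 1
          push_cast
          ring
      _ = Complex.exp (-((a + b) / 2) * (u : ℂ)) * (Complex.exp ((a - b) * (θ : ℂ)) *
            ∫ w : ℝ, Complex.exp (-(a - b) * (w : ℂ) - (R : ℂ) * (Real.cosh w : ℂ))) := by
          rw [integral_const_mul]
      _ = 2 * (besselK (a - b) R * Complex.exp (-((a + b) / 2) * (u : ℂ)) *
            ((r : ℝ) : ℂ) ^ ((a - b) / 2)) := by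
          have h2K : (∫ w : ℝ, Complex.exp (-(a - b) * (w : ℂ) - (R : ℂ) * (Real.cosh w : ℂ)))
              = 2 * besselK (a - b) R := by rw [besselK]; ring
          have hpow : ((r : ℝ) : ℂ) ^ ((a - b) / 2) = Complex.exp ((a - b) * (θ : ℂ)) := by
            rw [cpow_half_log hr0 (a - b), hθdef]
          rw [h2K, hpow]
          ring
  rw [key, integral_congr_ae (Filter.Eventually.of_forall hinner), integral_const_mul]
  ring
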